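/- The volume of the region A(X) = {(y₁,y₂,y₃) ∈ [1,∞)³ : y₁y₂² ≤ X, y₁y₃² ≤ X} satisfies Vol(A(X)) ~ X·log X as X → ∞. -/

import Mathlib

open MeasureTheory Filter
open scoped ENNReal

theorem key_integral (X : ℝ) (hX : 1 ≤ X) :
    ∫ t in (1:ℝ)..X, (Real.sqrt (X/t) - 1)^2
      = X * Real.log X - 3*X + 4*Real.sqrt X - 1 := by
  have h0X : (0:ℝ) < X := by linarith
  have hint : ∀ t ∈ Set.uIcc (1:ℝ) X,
      (Real.sqrt (X/t) - 1)^2 = X * (1/t) - 2*Real.sqrt X * t ^ (-(1/2) : ℝ) + 1 := by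
    intro t ht
    rw [Set.uIcc_of_le hX] at ht
    have ht0 : (0:ℝ) < t := lt_of_lt_of_le one_pos ht.1
    have h1 : Real.sqrt (X/t) ^ 2 = X / t := Real.sq_sqrt (by positivity)
    have h2 : Real.sqrt (X/t) = Real.sqrt X * t ^ (-(1/2) : ℝ) := by
      rw [Real.sqrt_div h0X.le, Real.sqrt_eq_rpow t, Real.rpow_neg ht0.le, div_eq_mul_inv]
    have h3 : (Real.sqrt (X/t) - 1)^2 = Real.sqrt (X/t)^2 - 2*Real.sqrt (X/t) + 1 := by ring
    rw [h3, h1, h2]; ring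
  rw [intervalIntegral.integral_congr hint]
  have i1 : IntervalIntegrable (fun t : ℝ => X * (1/t)) volume 1 X := by
    apply ContinuousOn.intervalIntegrable
    apply ContinuousOn.mul continuousOn_const
    apply ContinuousOn.div continuousOn_const continuousOn_id
    intro t ht
    rw [Set.uIcc_of_le hX] at ht
    exact ne_of_gt (lt_of_lt_of_le one_pos ht.1)
  have i2 : IntervalIntegrable (fun t : ℝ => 2*Real.sqrt X * t ^ (-(1/2) : ℝ)) volume 1 X :=
    (intervalIntegral.intervalIntegrable_rpow' (by norm_num)).const_mul _
  have i3 : IntervalIntegrable (fun _ : ℝ => (1:ℝ)) volume 1 X := intervalIntegrable_const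
  rw [intervalIntegral.integral_add (i1.sub i2) i3, intervalIntegral.integral_sub i1 i2,
    intervalIntegral.integral_const_mul, intervalIntegral.integral_const_mul,
    integral_one_div (by
      intro h; rw [Set.uIcc_of_le hX] at h; exact absurd h.1 (by norm_num)),
    integral_rpow (Or.inl (by norm_num)), intervalIntegral.integral_const]
  have e1 : (-(1/2) : ℝ) + 1 = 1/2 := by norm_num
  rw [e1, ← Real.sqrt_eq_rpow, ← Real.sqrt_eq_rpow, Real.sqrt_one, div_one, smul_eq_mul]
  have e2 : Real.sqrt X * Real.sqrt X = X := Real.mul_self_sqrt h0X.le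
  field_simp
  nlinarith [e2]

theorem vol_eq (X : ℝ) (hX : 1 ≤ X) :
    volume {y : ℝ × ℝ × ℝ | 1 ≤ y.1 ∧ 1 ≤ y.2.1 ∧ 1 ≤ y.2.2 ∧
        y.1 * y.2.1 ^ 2 ≤ X ∧ y.1 * y.2.2 ^ 2 ≤ X}
      = ENNReal.ofReal (X * Real.log X - 3*X + 4*Real.sqrt X - 1) := by
  have h0X : (0:ℝ) < X := by linarith
  set S : Set (ℝ × ℝ × ℝ) := {y : ℝ × ℝ × ℝ | 1 ≤ y.1 ∧ 1 ≤ y.2.1 ∧ 1 ≤ y.2.2 ∧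
        y.1 * y.2.1 ^ 2 ≤ X ∧ y.1 * y.2.2 ^ 2 ≤ X} with hSdef
  have hS : MeasurableSet S := by
    apply IsClosed.measurableSet
    have : S = {y : ℝ × ℝ × ℝ | 1 ≤ y.1} ∩ ({y | 1 ≤ y.2.1} ∩ ({y | 1 ≤ y.2.2} ∩
        ({y | y.1 * y.2.1 ^ 2 ≤ X} ∩ {y | y.1 * y.2.2 ^ 2 ≤ X}))) := by
      ext y; simp [hSdef, and_assoc]
    rw [this]
    refine (isClosed_le continuous_const continuous_fst).inter
      ((isClosed_le continuous_const (continuous_fst.comp continuous_snd)).inter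
      ((isClosed_le continuous_const (continuous_snd.comp continuous_snd)).inter
      ((isClosed_le (by fun_prop) continuous_const).inter
       (isClosed_le (by fun_prop) continuous_const))))
  set g : ℝ → ℝ≥0∞ := fun x =>
    ENNReal.ofReal (Real.sqrt (X/x) - 1) * ENNReal.ofReal (Real.sqrt (X/x) - 1) with hg
  have hslice : ∀ x : ℝ, (volume : Measure (ℝ × ℝ)) (Prod.mk x ⁻¹' S) =
      Set.indicator (Set.Ici 1) g x := by
    intro x
    rcases le_or_gt 1 x with hx | hx
    · have hx0 : (0:ℝ) < x := lt_of_lt_of_le one_pos hx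
      have hpre : (Prod.mk x ⁻¹' S : Set (ℝ × ℝ)) =
          Set.Icc 1 (Real.sqrt (X/x)) ×ˢ Set.Icc 1 (Real.sqrt (X/x)) := by
        ext p
        have key : ∀ t : ℝ, 1 ≤ t → (x * t ^ 2 ≤ X ↔ t ≤ Real.sqrt (X/x)) := by
          intro t ht
          rw [Real.le_sqrt' (by linarith), le_div_iff₀ hx0]
          constructor <;> intro h <;> linarith
        simp only [Set.mem_preimage, hSdef, Set.mem_setOf_eq, Set.mem_prod, Set.mem_Icc]
        constructor
        · rintro ⟨-, h1, h2, h3, h4⟩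
          exact ⟨⟨h1, (key _ h1).1 h3⟩, ⟨h2, (key _ h2).1 h4⟩⟩
        · rintro ⟨⟨h1, h3⟩, ⟨h2, h4⟩⟩
          exact ⟨hx, h1, h2, (key _ h1).2 h3, (key _ h2).2 h4⟩
      rw [hpre, Set.indicator_of_mem (show x ∈ Set.Ici 1 from hx) g, Measure.volume_eq_prod, Measure.prod_prod,
        Real.volume_Icc, hg]
    · have hpre : (Prod.mk x ⁻¹' S : Set (ℝ × ℝ)) = ∅ := by
        ext p
        simp only [Set.mem_preimage, hSdef, Set.mem_setOf_eq, Set.mem_empty_iff_false, iff_false]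
        rintro ⟨h, -⟩; linarith
      rw [hpre, Set.indicator_of_notMem (by simpa using hx)]
      simp
  rw [Measure.volume_eq_prod, Measure.prod_apply hS]
  simp only [hslice]
  rw [lintegral_indicator measurableSet_Ici, ← Set.Icc_union_Ioi_eq_Ici hX,
    lintegral_union measurableSet_Ioi (by
      rw [Set.disjoint_left]; intro t ht ht'
      exact absurd ht.2 (not_le.mpr ht'))]
  have hIoi : ∫⁻ x in Set.Ioi X, g x = 0 := by
    rw [setLIntegral_congr_fun measurableSet_Ioi (fun x hx => ?_), lintegral_zero]
    have hx0 : (0:ℝ) < x := lt_of_le_of_lt h0X.le hx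
    have : Real.sqrt (X/x) < 1 := by
      rw [show (1:ℝ) = Real.sqrt 1 by simp]
      exact Real.sqrt_lt_sqrt (by positivity) (by rw [div_lt_one hx0]; exact hx)
    rw [hg]
    simp only []
    rw [ENNReal.ofReal_of_nonpos (by linarith), zero_mul]
  rw [hIoi, add_zero]
  have hIcc : ∫⁻ x in Set.Icc 1 X, g x
      = ∫⁻ x in Set.Icc 1 X, ENNReal.ofReal ((Real.sqrt (X/x) - 1)^2) := by
    apply setLIntegral_congr_fun measurableSet_Icc
    intro x hx
    have hx0 : (0:ℝ) < x := lt_of_lt_of_le one_pos hx.1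
    have h1 : (1:ℝ) ≤ Real.sqrt (X/x) := by
      rw [show (1:ℝ) = Real.sqrt 1 by simp]
      exact Real.sqrt_le_sqrt (by rw [le_div_iff₀ hx0]; linarith [hx.2])
    rw [hg]
    simp only []
    rw [← ENNReal.ofReal_mul (by linarith), sq]
  rw [hIcc]
  have hInt : IntegrableOn (fun x : ℝ => (Real.sqrt (X/x) - 1)^2) (Set.Icc 1 X) := by
    apply ContinuousOn.integrableOn_Icc
    apply ContinuousOn.pow
    apply ContinuousOn.sub _ continuousOn_const
    apply Real.continuous_sqrt.comp_continuousOn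
    apply ContinuousOn.div continuousOn_const continuousOn_id
    intro t ht; exact ne_of_gt (lt_of_lt_of_le one_pos ht.1)
  rw [← ofReal_integral_eq_lintegral_ofReal hInt (ae_of_all _ (fun x => by positivity))]
  rw [MeasureTheory.integral_Icc_eq_integral_Ioc, ← intervalIntegral.integral_of_le hX]
  rw [key_integral X hX]
theorem volume_A_asymptotic :
    Tendsto (fun X : ℝ =>
        (volume {y : ℝ × ℝ × ℝ | 1 ≤ y.1 ∧ 1 ≤ y.2.1 ∧ 1 ≤ y.2.2 ∧
            y.1 * y.2.1 ^ 2 ≤ X ∧ y.1 * y.2.2 ^ 2 ≤ X}).toReal / (X * Real.log X))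
      atTop (nhds 1) := by
  have hsqrt : Tendsto Real.sqrt atTop atTop := by
    rw [show Real.sqrt = fun x : ℝ => x ^ (1/2 : ℝ) from funext Real.sqrt_eq_rpow]
    exact tendsto_rpow_atTop (by norm_num)
  have h1 : Tendsto (fun X : ℝ => (Real.log X)⁻¹) atTop (nhds 0) :=
    tendsto_inv_atTop_zero.comp Real.tendsto_log_atTop
  have h2 : Tendsto (fun X : ℝ => (Real.sqrt X * Real.log X)⁻¹) atTop (nhds 0) :=
    tendsto_inv_atTop_zero.comp (hsqrt.atTop_mul_atTop₀ Real.tendsto_log_atTop)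
  have h3 : Tendsto (fun X : ℝ => (X * Real.log X)⁻¹) atTop (nhds 0) :=
    tendsto_inv_atTop_zero.comp (tendsto_id.atTop_mul_atTop₀ Real.tendsto_log_atTop)
  have hmain' := (((tendsto_const_nhds : Tendsto (fun _ : ℝ => (1:ℝ)) atTop (nhds 1)).sub (h1.const_mul 3)).add (h2.const_mul 4)).sub h3
  have hmain : Tendsto (fun X : ℝ =>
      1 - 3 * (Real.log X)⁻¹ + 4 * (Real.sqrt X * Real.log X)⁻¹ - (X * Real.log X)⁻¹)
      atTop (nhds 1) := by
    simpa using hmain'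
  apply hmain.congr'
  filter_upwards [eventually_ge_atTop (Real.exp 3)] with X hXe
  have hX1 : (1:ℝ) ≤ X := le_trans (by nlinarith [Real.exp_pos 3, Real.add_one_le_exp (3:ℝ)]) hXe
  have h0X : (0:ℝ) < X := by linarith
  have hlog : (3:ℝ) ≤ Real.log X := (Real.le_log_iff_exp_le h0X).mpr hXe
  have hs1 : (1:ℝ) ≤ Real.sqrt X := by
    rw [show (1:ℝ) = Real.sqrt 1 by simp]; exact Real.sqrt_le_sqrt hX1
  have hss : Real.sqrt X * Real.sqrt X = X := Real.mul_self_sqrt h0X.le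
  have hF0 : 0 ≤ X * Real.log X - 3*X + 4*Real.sqrt X - 1 := by nlinarith
  rw [vol_eq X hX1, ENNReal.toReal_ofReal hF0]
  have hlogne : Real.log X ≠ 0 := by linarith
  have hXne : X ≠ 0 := ne_of_gt h0X
  have hsne : Real.sqrt X ≠ 0 := by linarith
  field_simp
  ring_nf
  rw [Real.sq_sqrt h0X.le]
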